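/- Let S : [0,1] × {0,1} → ℝ be a proper scoring rule that is L-Lipschitz in its first argument, let m ≥ 1 be a natural number, and let q ∈ [0,1]. Then for every y ∈ [0,1] there exists k ∈ {0,1,…,m} such that S̄(k/m, y) − S̄(q, y) ≤ 2L/m². -/

import Mathlib

/-- The affine extension of a scoring rule `S : [0,1] × {0,1} → ℝ` to
`S̄(x, p) = (1−p)·S(x,0) + p·S(x,1)`. -/
noncomputable def Sbar (S : ℝ → Fin 2 → ℝ) (x p : ℝ) : ℝ :=
  (1 - p) * S x 0 + p * S x 1

/-- A scoring rule is proper if truthfully reporting minimizes the expected score. -/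
def ProperScoringRule (S : ℝ → Fin 2 → ℝ) : Prop :=
  ∀ p ∈ Set.Icc (0:ℝ) 1, ∀ x ∈ Set.Icc (0:ℝ) 1, Sbar S p p ≤ Sbar S x p

/-- `S` is `L`-Lipschitz in its first argument on `[0,1]`. -/
def LipschitzScoringRule (S : ℝ → Fin 2 → ℝ) (L : ℝ) : Prop :=
  ∀ x ∈ Set.Icc (0:ℝ) 1, ∀ x' ∈ Set.Icc (0:ℝ) 1, ∀ y : Fin 2,
    |S x y - S x' y| ≤ L * |x - x'|

theorem stmt1 (S : ℝ → Fin 2 → ℝ) (L : ℝ)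
    (hproper : ProperScoringRule S) (hlip : LipschitzScoringRule S L)
    (m : ℕ) (hm : 1 ≤ m) (q : ℝ) (hq : q ∈ Set.Icc (0:ℝ) 1) :
    ∀ y ∈ Set.Icc (0:ℝ) 1, ∃ k : ℕ, k ≤ m ∧
      Sbar S ((k : ℝ) / m) y - Sbar S q y ≤ 2 * L / m ^ 2 := by
  intro y hy
  obtain ⟨hy0, hy1⟩ := hy
  have hm0 : (0:ℝ) < m := by exact_mod_cast Nat.pos_of_ne_zero (by omega)
  set k : ℕ := ⌊(m:ℝ) * y⌋₊ with hkdef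
  have hkm : k ≤ m := by
    have h1 : (m:ℝ) * y ≤ (m:ℝ) := by nlinarith
    have := Nat.floor_le_floor (R := ℝ) h1
    simpa using this
  refine ⟨k, hkm, ?_⟩
  set x : ℝ := (k:ℝ) / m with hxdef
  have hkle : (k:ℝ) ≤ (m:ℝ) * y := Nat.floor_le (by positivity)
  have hxle : x ≤ y := by rw [hxdef, div_le_iff₀ hm0]; linarith
  have hklt : (m:ℝ) * y < k + 1 := Nat.lt_floor_add_one _
  have hdiff : y - x ≤ 1 / m := by
    rw [hxdef, sub_le_iff_le_add, ← add_div, le_div_iff₀ hm0]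
    linarith
  have hx0 : (0:ℝ) ≤ x := by positivity
  have hx1 : x ≤ 1 := by
    rw [hxdef, div_le_one hm0]; exact_mod_cast hkm
  have h1 : Sbar S x x ≤ Sbar S y x := hproper x ⟨hx0, hx1⟩ y ⟨hy0, hy1⟩
  have h2 : Sbar S y y ≤ Sbar S q y := hproper y ⟨hy0, hy1⟩ q hq
  have ha := hlip x ⟨hx0, hx1⟩ y ⟨hy0, hy1⟩ 0
  have hb := hlip x ⟨hx0, hx1⟩ y ⟨hy0, hy1⟩ 1
  have hL : 0 ≤ L := by
    have := hlip 0 ⟨le_refl 0, zero_le_one⟩ 1 ⟨zero_le_one, le_refl 1⟩ 0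
    have habs : |(0:ℝ) - 1| = 1 := by norm_num
    rw [habs, mul_one] at this
    exact le_trans (abs_nonneg _) this
  have habs : |x - y| = y - x := by
    rw [abs_sub_comm]; exact abs_of_nonneg (by linarith)
  rw [habs] at ha hb
  have ha' := abs_le.mp ha
  have hb' := abs_le.mp hb
  have hsq : (y - x)^2 ≤ 1 / m^2 := by
    have h0 : 0 ≤ y - x := by linarith
    have := mul_le_mul hdiff hdiff h0 (by positivity)
    calc (y - x)^2 = (y - x) * (y - x) := by ring
      _ ≤ (1/m) * (1/m) := this
      _ = 1 / m^2 := by ring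
  simp only [Sbar] at h1 h2 ⊢
  have key : (1 - y) * S x 0 + y * S x 1 - ((1 - y) * S y 0 + y * S y 1) ≤
      2 * L * (y - x)^2 := by
    nlinarith [mul_le_mul_of_nonneg_left ha'.2 (show (0:ℝ) ≤ y - x by linarith),
      mul_le_mul_of_nonneg_left hb'.2 (show (0:ℝ) ≤ y - x by linarith),
      mul_le_mul_of_nonneg_left ha'.1 (show (0:ℝ) ≤ y - x by linarith),
      mul_le_mul_of_nonneg_left hb'.1 (show (0:ℝ) ≤ y - x by linarith)]
  have hfin : 2 * L * (y - x)^2 ≤ 2 * L / (m:ℝ)^2 := by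
    have := mul_le_mul_of_nonneg_left hsq (show (0:ℝ) ≤ 2*L by linarith)
    rw [mul_one_div] at this
    exact this
  linarith
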